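/- Consider the tropical polyhedron P in T^{2r} defined by the inequalities x₁ ≤ 2, x₂ ≤ 1, x_{2j+1} ≤ 1 + x_{2j−1}, x_{2j+1} ≤ 1 + x_{2j}, x_{2j+2} ≤ (1 − 1/2^j) + max(x_{2j−1}, x_{2j}) for 1 ≤ j < r, intersected with {x : x₁ ≤ λ} for a real λ. Then this set has a greatest element (coordinatewise maximum) given by the recursion x₁ = min(λ,2), x₂ = 1, x_{2j+1} = 1 + min(x_{2j−1}, x_{2j}), x_{2j+2} = (1 − 1/2^j) + max(x_{2j−1}, x_{2j}). -/

import Mathlib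

/-- The sublevel set of the tropical polyhedron associated with the "long and
winding" linear program, cut by `x₁ ≤ λ`, has a greatest element
(coordinatewise maximum) `xb`, given by the recursion `xb₁ = min(λ,2)`,
`xb₂ = 1`, `xb_{2j+1} = 1 + min(xb_{2j-1}, xb_{2j})`,
`xb_{2j+2} = (1 - 1/2^j) + max(xb_{2j-1}, xb_{2j})`. Points of `T^{2r}` are
modeled as maps `ℕ → WithBot ℝ` that are `⊥` outside the coordinates
`1, …, 2r`. -/
theorem tropical_sublevel_barycenter (r : ℕ) (hr : 1 ≤ r) (lam : ℝ)
    (xb : ℕ → WithBot ℝ)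
    (hb0 : ∀ i : ℕ, i = 0 ∨ 2 * r < i → xb i = ⊥)
    (hb1 : xb 1 = ((min lam 2 : ℝ) : WithBot ℝ))
    (hb2 : xb 2 = ((1 : ℝ) : WithBot ℝ))
    (hbo : ∀ j : ℕ, 1 ≤ j → j < r →
      xb (2 * j + 1) = 1 + min (xb (2 * j - 1)) (xb (2 * j)))
    (hbe : ∀ j : ℕ, 1 ≤ j → j < r →
      xb (2 * j + 2) =
        ((1 - 1 / 2 ^ j : ℝ) : WithBot ℝ) + max (xb (2 * j - 1)) (xb (2 * j))) :
    xb ∈ {z : ℕ → WithBot ℝ |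
        (∀ i : ℕ, i = 0 ∨ 2 * r < i → z i = ⊥) ∧
        z 1 ≤ ((2 : ℝ) : WithBot ℝ) ∧
        z 2 ≤ ((1 : ℝ) : WithBot ℝ) ∧
        (∀ j : ℕ, 1 ≤ j → j < r →
          z (2 * j + 1) ≤ 1 + z (2 * j - 1) ∧
          z (2 * j + 1) ≤ 1 + z (2 * j) ∧
          z (2 * j + 2) ≤
            ((1 - 1 / 2 ^ j : ℝ) : WithBot ℝ) +
              max (z (2 * j - 1)) (z (2 * j))) ∧
        z 1 ≤ ((lam : ℝ) : WithBot ℝ)} ∧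
      ∀ z ∈ {z : ℕ → WithBot ℝ |
        (∀ i : ℕ, i = 0 ∨ 2 * r < i → z i = ⊥) ∧
        z 1 ≤ ((2 : ℝ) : WithBot ℝ) ∧
        z 2 ≤ ((1 : ℝ) : WithBot ℝ) ∧
        (∀ j : ℕ, 1 ≤ j → j < r →
          z (2 * j + 1) ≤ 1 + z (2 * j - 1) ∧
          z (2 * j + 1) ≤ 1 + z (2 * j) ∧
          z (2 * j + 2) ≤
            ((1 - 1 / 2 ^ j : ℝ) : WithBot ℝ) +
              max (z (2 * j - 1)) (z (2 * j))) ∧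
        z 1 ≤ ((lam : ℝ) : WithBot ℝ)}, z ≤ xb := by
  constructor
  · refine ⟨hb0, ?_, ?_, ?_, ?_⟩
    · rw [hb1]; exact_mod_cast min_le_right lam 2
    · rw [hb2]
    · intro j hj1 hjr
      refine ⟨?_, ?_, ?_⟩
      · rw [hbo j hj1 hjr]
        exact add_le_add_right (min_le_left _ _) _
      · rw [hbo j hj1 hjr]
        exact add_le_add_right (min_le_right _ _) _
      · rw [hbe j hj1 hjr]
    · rw [hb1]; exact_mod_cast min_le_left lam 2
  · rintro z ⟨hz0, hz1, hz2, hzj, hzl⟩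
    have key : ∀ j : ℕ, 1 ≤ j → j ≤ r →
        z (2 * j - 1) ≤ xb (2 * j - 1) ∧ z (2 * j) ≤ xb (2 * j) := by
      intro j
      induction j with
      | zero => intro h; omega
      | succ j ih =>
        intro _ hjr
        rcases Nat.eq_zero_or_pos j with rfl | hj
        · have e1 : 2 * (0 + 1) - 1 = 1 := by norm_num
          have e2 : 2 * (0 + 1) = 2 := by norm_num
          rw [e1, e2, hb1, hb2]
          refine ⟨?_, hz2⟩
          have : ((min lam 2 : ℝ) : WithBot ℝ) = min ((lam : ℝ) : WithBot ℝ) ((2:ℝ) : WithBot ℝ) := by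
            exact_mod_cast WithBot.coe_min lam 2
          rw [this]
          exact le_min hzl hz1
        · have hjr' : j < r := by omega
          obtain ⟨ha, hb⟩ := ih hj (le_of_lt hjr')
          obtain ⟨h1, h2, h3⟩ := hzj j hj hjr'
          have e1 : 2 * (j + 1) - 1 = 2 * j + 1 := by omega
          have e2 : 2 * (j + 1) = 2 * j + 2 := by omega
          rw [e1, e2, hbo j hj hjr', hbe j hj hjr']
          constructor
          · rcases le_total (xb (2 * j - 1)) (xb (2 * j)) with h | h
            · rw [min_eq_left h]
              exact le_trans h1 (add_le_add_right ha _)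
            · rw [min_eq_right h]
              exact le_trans h2 (add_le_add_right hb _)
          · exact le_trans h3 (add_le_add_right (max_le_max ha hb) _)
    intro i
    by_cases hi : i = 0 ∨ 2 * r < i
    · rw [hz0 i hi]; exact bot_le
    · push_neg at hi
      obtain ⟨j, hj1, hjr, hij⟩ : ∃ j : ℕ, 1 ≤ j ∧ j ≤ r ∧ (i = 2 * j - 1 ∨ i = 2 * j) := by
        refine ⟨(i + 1) / 2, by omega, by omega, by omega⟩
      obtain ⟨ha, hb⟩ := key j hj1 hjr
      rcases hij with rfl | rfl
      · exact ha
      · exact hb
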